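/- Consider the nominal distributed linear system z_i(k+1|t) = Σ_{j=1}^M A_{ij} z_j(k|t) + B_i v_i(k|t) over a prediction horizon N ≥ 1, with terminal equality constraint z_i(N|t) = 0 for all i, and time-varying tightened half-space constraints h_{i,j}^{x⊤} z_i(k|t) ≤ 1 − c^x_{i,j,t+k} for all j ∈ {1,…,n_i^x} and h_{i,j}^{u⊤} v_i(k|t) ≤ 1 − c^u_{i,j,t+k} for all j ∈ {1,…,n_i^u}, for k = 0,…,N−1. Assume every tightening value satisfies c^x_{i,j,τ} ≤ 1 and c^u_{i,j,τ} ≤ 1 for all subsystems i, constraint indices j and time indices τ. If the input sequences (v_i(k|t))_{k=0}^{N−1} together with the resulting nominal state sequences (z_i(k|t))_{k=0}^{N} are feasible at time t (i.e., they satisfy the dynamics, the terminal constraint, and all tightened constraints), then the shifted candidate defined by v_i(k|t+1) = v_i(k+1|t) for k = 0,…,N−2 and v_i(N−1|t+1) = 0, with initialization z_i(0|t+1) = z_i(1|t), is feasible for the problem at time t+1: the resulting nominal states satisfy the dynamics, z_i(N|t+1) = 0, and all tightened state and input constraints indexed by t+1. -/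
import Mathlib


open Matrix

/-- Feasibility of the shifted candidate solution for the nominal distributed MPC
problem: if `(z, v)` is feasible at time `t` (dynamics, terminal equality constraint,
and tightened half-space constraints with tightening values bounded by 1), then the
shifted candidate `v'` (shift the inputs, append zero) with indirect-feedback
initialization `z'_i(0|t+1) = z_i(1|t)` is feasible at time `t+1`. -/
theorem shifted_candidate_feasible
    (M N : ℕ) (hN : 1 ≤ N)
    (n m : Fin M → ℕ)
    (A : ∀ i j : Fin M, Matrix (Fin (n i)) (Fin (n j)) ℝ)
    (B : ∀ i : Fin M, Matrix (Fin (n i)) (Fin (m i)) ℝ)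
    (nx nu : Fin M → ℕ)
    (hx : ∀ i : Fin M, Fin (nx i) → (Fin (n i) → ℝ))
    (hu : ∀ i : Fin M, Fin (nu i) → (Fin (m i) → ℝ))
    (cx : ∀ i : Fin M, Fin (nx i) → ℕ → ℝ)
    (cu : ∀ i : Fin M, Fin (nu i) → ℕ → ℝ)
    (hcx : ∀ i (j : Fin (nx i)) (τ : ℕ), cx i j τ ≤ 1)
    (hcu : ∀ i (j : Fin (nu i)) (τ : ℕ), cu i j τ ≤ 1)
    (t : ℕ)
    -- solution feasible at time t
    (z : ∀ i : Fin M, ℕ → (Fin (n i) → ℝ))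
    (v : ∀ i : Fin M, ℕ → (Fin (m i) → ℝ))
    (hdyn : ∀ i, ∀ k < N,
      z i (k + 1) = (∑ j, (A i j).mulVec (z j k)) + (B i).mulVec (v i k))
    (hterm : ∀ i, z i N = 0)
    (hstate : ∀ i, ∀ k < N, ∀ j : Fin (nx i), hx i j ⬝ᵥ z i k ≤ 1 - cx i j (t + k))
    (hinput : ∀ i, ∀ k < N, ∀ j : Fin (nu i), hu i j ⬝ᵥ v i k ≤ 1 - cu i j (t + k))
    -- shifted candidate at time t+1
    (z' : ∀ i : Fin M, ℕ → (Fin (n i) → ℝ))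
    (v' : ∀ i : Fin M, ℕ → (Fin (m i) → ℝ))
    (hv'shift : ∀ i, ∀ k < N - 1, v' i k = v i (k + 1))
    (hv'last : ∀ i, v' i (N - 1) = 0)
    (hz'init : ∀ i, z' i 0 = z i 1)
    (hdyn' : ∀ i, ∀ k < N,
      z' i (k + 1) = (∑ j, (A i j).mulVec (z' j k)) + (B i).mulVec (v' i k)) :
    (∀ i, z' i N = 0) ∧
    (∀ i, ∀ k < N, ∀ j : Fin (nx i), hx i j ⬝ᵥ z' i k ≤ 1 - cx i j (t + 1 + k)) ∧
    (∀ i, ∀ k < N, ∀ j : Fin (nu i), hu i j ⬝ᵥ v' i k ≤ 1 - cu i j (t + 1 + k)) := by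
  have key : ∀ k ≤ N - 1, ∀ i, z' i k = z i (k + 1) := by
    intro k
    induction k with
    | zero => intro _ i; exact hz'init i
    | succ k ih =>
      intro hk i
      have hk1 : k < N - 1 := Nat.lt_of_lt_of_le (Nat.lt_succ_self k) hk
      have hkN : k + 1 < N := by omega
      rw [hdyn' i k (by omega), hdyn i (k + 1) hkN, hv'shift i k hk1]
      congr 1
      apply Finset.sum_congr rfl
      intro j _
      rw [ih (by omega) j]
  refine ⟨?_, ?_, ?_⟩
  · intro i
    have hN1 : N - 1 + 1 = N := Nat.succ_pred_eq_of_pos hN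
    have : z' i (N - 1 + 1) = _ := hdyn' i (N - 1) (by omega)
    rw [hN1] at this
    rw [this, hv'last i]
    have hz0 : ∀ j, z' j (N - 1) = 0 := by
      intro j; rw [key (N - 1) le_rfl j, hN1, hterm j]
    simp [hz0, Matrix.mulVec_zero]
  · intro i k hk j
    rcases Nat.lt_or_ge (k + 1) N with h | h
    · rw [key k (by omega) i]
      have := hstate i (k + 1) h j
      rwa [show t + 1 + k = t + (k + 1) by ring]
    · have hkN : k = N - 1 := by omega
      subst hkN
      rw [key _ (by omega) i, show N - 1 + 1 = N by omega, hterm i]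
      have := hcx i j (t + 1 + (N - 1))
      simp [dotProduct_zero]
      linarith
  · intro i k hk j
    rcases Nat.lt_or_ge k (N - 1) with h | h
    · rw [hv'shift i k h]
      have := hinput i (k + 1) (by omega) j
      rwa [show t + 1 + k = t + (k + 1) by ring]
    · have hkN : k = N - 1 := by omega
      subst hkN
      rw [hv'last i]
      have := hcu i j (t + 1 + (N - 1))
      simp [dotProduct_zero]
      linarith
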